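/- Let h be an N×N real symmetric tridiagonal matrix with positive off-diagonal entries, let λ_1 > λ_2 > … > λ_N be its eigenvalues, and let t_r > 0. Then there exists a complex number c with |c| = 1 such that exp(−i t_r h)·e_1 = c·e_1 (a perfect revival on the first site at time t_r) if and only if for every n with 1 ≤ n ≤ N−1, the number (λ_n − λ_{n+1})·t_r/π is a positive even integer. -/

import Mathlib

open Polynomial Matrix

lemma charpoly_eval_eq {R : Type*} [CommRing R] {n : Type*} [Fintype n] [DecidableEq n]
    (M : Matrix n n R) (t : R) :
    M.charpoly.eval t = (t • (1 : Matrix n n R) - M).det := by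
  rw [Matrix.charpoly, ← Polynomial.coe_evalRingHom, RingHom.map_det]
  congr 1
  ext i j
  by_cases hij : i = j
  · subst hij
    simp [Matrix.charmatrix_apply_eq, Matrix.one_apply]
  · simp [Matrix.charmatrix_apply_ne _ _ _ hij, Matrix.one_apply, hij]

lemma jacobi_eigenvector_first_ne_zero {N : ℕ} (hN : 0 < N) (h : Matrix (Fin N) (Fin N) ℝ)
    (htri : ∀ i j : Fin N, (i : ℕ) + 1 < (j : ℕ) ∨ (j : ℕ) + 1 < (i : ℕ) → h i j = 0)
    (hoffpos : ∀ i j : Fin N, (i : ℕ) + 1 = (j : ℕ) → 0 < h i j)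
    (v : Fin N → ℂ) (t : ℂ)
    (hv : (h.map Complex.ofReal) *ᵥ v = t • v)
    (h0 : v ⟨0, hN⟩ = 0) : v = 0 := by
  have key : ∀ m : ℕ, ∀ hm : m < N, v ⟨m, hm⟩ = 0 := by
    intro m
    induction m using Nat.strong_induction_on with
    | _ m ih =>
      intro hm
      match m, hm, ih with
      | 0, hm, _ => exact h0
      | (k+1), hm, ih =>
        have hk : k < N := by omega
        have hrow := congrFun hv ⟨k, hk⟩
        have hsum : (h.map Complex.ofReal *ᵥ v) ⟨k, hk⟩
            = (h ⟨k, hk⟩ ⟨k+1, hm⟩ : ℂ) * v ⟨k+1, hm⟩ := by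
          rw [Matrix.mulVec, dotProduct]
          apply Finset.sum_eq_single (⟨k+1, hm⟩ : Fin N)
          · intro b _ hb
            rcases lt_or_gt_of_ne (fun hval : (b : ℕ) = k+1 => hb (Fin.ext hval)) with hlt | hgt
            · have : v b = 0 := by
                have := ih b (by omega) b.isLt
                simpa [Fin.eta] using this
              simp [this]
            · have : h ⟨k, hk⟩ b = 0 := htri _ _ (Or.inl (by simpa using hgt))
              simp [Matrix.map_apply, this]
          · simp
        have hvk : v ⟨k, hk⟩ = 0 := ih k (by omega) hk
        rw [hsum] at hrow
        have : (h ⟨k, hk⟩ ⟨k+1, hm⟩ : ℂ) * v ⟨k+1, hm⟩ = 0 := by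
          rw [hrow]
          simp [hvk]
        have hne : (h ⟨k, hk⟩ ⟨k+1, hm⟩ : ℂ) ≠ 0 := by
          exact_mod_cast ne_of_gt (hoffpos _ _ rfl)
        exact (mul_eq_zero.mp this).resolve_left hne
  funext i
  have := key i.val i.isLt
  simpa [Fin.eta] using this

theorem perfect_revival_iff
    (N : ℕ) (hN : 0 < N) (h : Matrix (Fin N) (Fin N) ℝ)
    (hsym : h.IsSymm)
    (htri : ∀ i j : Fin N, (i : ℕ) + 1 < (j : ℕ) ∨ (j : ℕ) + 1 < (i : ℕ) → h i j = 0)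
    (hoffpos : ∀ i j : Fin N, (i : ℕ) + 1 = (j : ℕ) → 0 < h i j)
    (lam : Fin N → ℝ) (hdec : StrictAnti lam)
    (hspec : h.charpoly = ∏ n : Fin N, (X - C (lam n)))
    (tr : ℝ) (htr : 0 < tr) :
    (∃ c : ℂ, ‖c‖ = 1 ∧
      (NormedSpace.exp
          ((-(Complex.I * (tr : ℂ))) • h.map Complex.ofReal)).mulVec
          (Pi.single (⟨0, hN⟩ : Fin N) (1 : ℂ))
        = c • (Pi.single (⟨0, hN⟩ : Fin N) (1 : ℂ) : Fin N → ℂ)) ↔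
    (∀ i : ℕ, (hi : i + 1 < N) → ∃ k : ℕ, 0 < k ∧
      (lam ⟨i, by omega⟩ - lam ⟨i + 1, hi⟩) * tr / Real.pi = 2 * k) := by
  classical
  set i0 : Fin N := ⟨0, hN⟩ with hi0
  set A : Matrix (Fin N) (Fin N) ℂ := h.map Complex.ofReal with hA_def
  have hsym' : ∀ i j, h j i = h i j := fun i j => congrFun (congrFun hsym i) j
  have hherm : A.IsHermitian := by
    rw [Matrix.IsHermitian]
    ext i j
    simp only [Matrix.conjTranspose_apply, hA_def, Matrix.map_apply, Complex.star_def,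
      Complex.conj_ofReal]
    exact_mod_cast hsym' i j
  set μ : Fin N → ℝ := hherm.eigenvalues with hμ
  set U : Matrix (Fin N) (Fin N) ℂ := (hherm.eigenvectorUnitary : Matrix (Fin N) (Fin N) ℂ)
    with hU
  have hU₁ : star U * U = 1 := Matrix.mem_unitaryGroup_iff'.mp hherm.eigenvectorUnitary.2
  have hU₂ : U * star U = 1 := Matrix.mem_unitaryGroup_iff.mp hherm.eigenvectorUnitary.2
  have hUinv : U⁻¹ = star U := Matrix.inv_eq_left_inv hU₁
  have hspecthm : A = U * Matrix.diagonal (fun n => (μ n : ℂ)) * star U := by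
    have := hherm.spectral_theorem
    rw [Unitary.conjStarAlgAut_apply] at this
    exact this
  -- eigenvector facts
  have hvec : ∀ n, A *ᵥ ⇑(hherm.eigenvectorBasis n)
      = (μ n : ℂ) • ⇑(hherm.eigenvectorBasis n) := by
    intro n
    have := hherm.mulVec_eigenvectorBasis n
    rw [this]
    funext i
    simp [Complex.real_smul, hμ]
  have hb0 : ∀ n, (hherm.eigenvectorBasis n) i0 ≠ 0 := by
    intro n hzero
    have hz := jacobi_eigenvector_first_ne_zero hN h htri hoffpos _ _ (hvec n) hzero
    exact hherm.eigenvectorBasis.orthonormal.ne_zero n (by ext i; exact congrFun hz i)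
  -- eigenvalue characterization
  have heig : ∀ t : ℝ, ((∃ i, lam i = t) ↔ (∃ n, μ n = t)) := by
    intro t
    have hdet : ((t : ℂ) • (1 : Matrix (Fin N) (Fin N) ℂ) - A).det
        = ((h.charpoly.eval t : ℝ) : ℂ) := by
      rw [← charpoly_eval_eq]
      have hmap : A = h.map (algebraMap ℝ ℂ) := rfl
      rw [hmap, Matrix.charpoly_map h (algebraMap ℝ ℂ), Polynomial.eval_map]
      have := Polynomial.eval₂_at_apply (p := h.charpoly) (algebraMap ℝ ℂ) t
      simpa using this
    constructor
    · rintro ⟨i, rfl⟩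
      have hroot : h.charpoly.eval (lam i) = 0 := by
        rw [hspec, Polynomial.eval_prod]
        exact Finset.prod_eq_zero (Finset.mem_univ i) (by simp)
      have hdet0 : ((lam i : ℂ) • (1 : Matrix (Fin N) (Fin N) ℂ) - A).det = 0 := by
        rw [hdet, hroot]; simp
      obtain ⟨v, hv0, hv⟩ := (Matrix.exists_mulVec_eq_zero_iff).mpr hdet0
      have hv' : A *ᵥ v = (lam i : ℂ) • v := by
        rw [Matrix.sub_mulVec, Matrix.smul_mulVec, Matrix.one_mulVec, sub_eq_zero] at hv
        exact hv.symm
      set x := star U *ᵥ v with hx_def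
      have hx0 : x ≠ 0 := by
        intro hx
        apply hv0
        have hUx : U *ᵥ x = v := by rw [hx_def, Matrix.mulVec_mulVec, hU₂, Matrix.one_mulVec]
        rw [← hUx, hx, Matrix.mulVec_zero]
      have hDx : Matrix.diagonal (fun n => (μ n : ℂ)) *ᵥ x = (lam i : ℂ) • x := by
        have h1 : star U *ᵥ (A *ᵥ v) = star U *ᵥ ((lam i : ℂ) • v) := by rw [hv']
        rw [Matrix.mulVec_smul, Matrix.mulVec_mulVec] at h1
        rw [show star U * A = Matrix.diagonal (fun n => (μ n : ℂ)) * star U by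
          rw [hspecthm, ← Matrix.mul_assoc, ← Matrix.mul_assoc, hU₁, Matrix.one_mul]] at h1
        rw [← Matrix.mulVec_mulVec] at h1
        exact h1
      obtain ⟨n, hn⟩ := Function.ne_iff.mp hx0
      refine ⟨n, ?_⟩
      have h2 := congrFun hDx n
      rw [Matrix.mulVec_diagonal] at h2
      have h3 : (μ n : ℂ) = lam i := mul_right_cancel₀ hn (h2.trans (by simp))
      exact_mod_cast h3
    · rintro ⟨n, rfl⟩
      have hdet0 : ((μ n : ℂ) • (1 : Matrix (Fin N) (Fin N) ℂ) - A).det = 0 := by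
        rw [← Matrix.exists_mulVec_eq_zero_iff]
        refine ⟨⇑(hherm.eigenvectorBasis n), ?_, ?_⟩
        · intro hzero
          exact hherm.eigenvectorBasis.orthonormal.ne_zero n (by ext i; exact congrFun hzero i)
        · rw [Matrix.sub_mulVec, Matrix.smul_mulVec, Matrix.one_mulVec, hvec n, sub_self]
      rw [hdet] at hdet0
      have h4 : h.charpoly.eval (μ n) = 0 := by exact_mod_cast hdet0
      rw [hspec] at h4
      simp only [Polynomial.eval_prod, Polynomial.eval_sub, Polynomial.eval_X, Polynomial.eval_C,
        Finset.prod_eq_zero_iff, Finset.mem_univ, true_and, sub_eq_zero] at h4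
      obtain ⟨i, hi⟩ := h4
      exact ⟨i, hi.symm⟩
  -- exp computation
  set z : ℂ := -(Complex.I * (tr : ℂ)) with hz_def
  set D : Matrix (Fin N) (Fin N) ℂ := Matrix.diagonal (fun n => Complex.exp (z * μ n)) with hD_def
  have hexp : NormedSpace.exp (z • A) = U * D * star U := by
    have h1 : z • A = U * (z • Matrix.diagonal (fun n => (μ n : ℂ))) * U⁻¹ := by
      rw [hUinv, hspecthm, Matrix.mul_smul, Matrix.smul_mul]
    rw [h1, Matrix.exp_conj U _ (isUnit_iff_exists.mpr ⟨star U, hU₂, hU₁⟩), hUinv]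
    congr 1
    rw [← Matrix.diagonal_smul, Matrix.exp_diagonal, hD_def]
    congr 1
    rw [Pi.exp_def]
    funext n
    simp [← Complex.exp_eq_exp_ℂ]
  -- reduce to diagonal equation
  set e1 : Fin N → ℂ := Pi.single i0 1 with he1
  set w : Fin N → ℂ := star U *ᵥ e1 with hw_def
  have hmain : ∀ c : ℂ, ((U * D * star U) *ᵥ e1 = c • e1 ↔ D *ᵥ w = c • w) := by
    intro c
    constructor
    · intro hc
      have : star U *ᵥ ((U * D * star U) *ᵥ e1) = star U *ᵥ (c • e1) := by rw [hc]
      rw [Matrix.mulVec_mulVec, Matrix.mulVec_smul] at this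
      rw [show star U * (U * D * star U) = D * star U by
        rw [← Matrix.mul_assoc, ← Matrix.mul_assoc, hU₁, Matrix.one_mul]] at this
      rw [← Matrix.mulVec_mulVec] at this
      exact this
    · intro hc
      have : U *ᵥ (D *ᵥ (star U *ᵥ e1)) = U *ᵥ (c • w) := by rw [← hw_def, hc]
      rw [Matrix.mulVec_mulVec, Matrix.mulVec_mulVec, Matrix.mulVec_smul] at this
      rw [this, hw_def, Matrix.mulVec_mulVec, hU₂, Matrix.one_mulVec]
  have hwval : ∀ n, w n = (starRingEnd ℂ) (hherm.eigenvectorBasis n i0) := by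
    intro n
    rw [hw_def, he1, Matrix.mulVec_single]
    simp [hU]
  have hwne : ∀ n, w n ≠ 0 := by
    intro n
    rw [hwval n]
    simpa using hb0 n
  constructor
  · rintro ⟨c, _, hc⟩
    have hDw : D *ᵥ w = c • w := by
      rw [← hmain c, ← hexp]
      exact hc
    have hcn : ∀ n, Complex.exp (z * μ n) = c := by
      intro n
      have := congrFun hDw n
      rw [hD_def, Matrix.mulVec_diagonal] at this
      exact mul_right_cancel₀ (hwne n) (this.trans (by simp))
    have hclam : ∀ i : Fin N, Complex.exp (z * lam i) = c := by
      intro i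
      obtain ⟨n, hn⟩ := (heig (lam i)).mp ⟨i, rfl⟩
      rw [← hn]
      exact hcn n
    intro i hi
    have h1 : Complex.exp (z * lam ⟨i, by omega⟩) = Complex.exp (z * lam ⟨i + 1, hi⟩) := by
      rw [hclam, hclam]
    rw [Complex.exp_eq_exp_iff_exists_int] at h1
    obtain ⟨m, hm⟩ := h1
    have him : Complex.I * ((-(tr * (lam ⟨i, by omega⟩ - lam ⟨i + 1, hi⟩)) : ℝ) : ℂ)
        = Complex.I * (((m : ℝ) * (2 * Real.pi) : ℝ) : ℂ) := by
      rw [hz_def] at hm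
      push_cast
      linear_combination hm
    have hreal : -(tr * (lam ⟨i, by omega⟩ - lam ⟨i + 1, hi⟩)) = (m : ℝ) * (2 * Real.pi) := by
      exact_mod_cast mul_left_cancel₀ Complex.I_ne_zero him
    have hab : lam ⟨i + 1, hi⟩ < lam ⟨i, by omega⟩ := by
      apply hdec
      simp [Fin.lt_def]
    have hprod : 0 < tr * (lam ⟨i, by omega⟩ - lam ⟨i + 1, hi⟩) :=
      mul_pos htr (by linarith)
    have hpi := Real.pi_pos
    have hmneg : (m : ℝ) < 0 := by nlinarith
    have hmneg' : m < 0 := by exact_mod_cast hmneg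
    refine ⟨(-m).toNat, by omega, ?_⟩
    have hkm : ((-m).toNat : ℝ) = -(m : ℝ) := by
      have : ((-m).toNat : ℤ) = -m := Int.toNat_of_nonneg (by omega)
      exact_mod_cast this
    rw [div_eq_iff (ne_of_gt hpi)]
    rw [hkm]
    linarith
  · intro hgap
    refine ⟨Complex.exp (z * lam i0), ?_, ?_⟩
    · rw [Complex.norm_exp]
      norm_num [hz_def, Complex.mul_re]
    · have hlam' : ∀ m : ℕ, (hm : m < N) →
          Complex.exp (z * lam ⟨m, hm⟩) = Complex.exp (z * lam i0) := by
        intro m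
        induction m with
        | zero => intro hm; rfl
        | succ k ih =>
          intro hm
          have hk : k < N := by omega
          obtain ⟨j, hj, hjeq⟩ := hgap k (by omega)
          have hjeq' : (lam ⟨k, hk⟩ - lam ⟨k + 1, hm⟩) * tr / Real.pi = 2 * j := hjeq
          have heq : (lam ⟨k, hk⟩ - lam ⟨k + 1, hm⟩) * tr = 2 * j * Real.pi := by
            rw [div_eq_iff Real.pi_ne_zero] at hjeq'
            linarith
          have heqC : ((lam ⟨k, hk⟩ : ℂ) - lam ⟨k + 1, hm⟩) * tr = 2 * j * Real.pi := by
            exact_mod_cast congrArg (Complex.ofReal) heq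
          have hstep : Complex.exp (z * lam ⟨k + 1, hm⟩) = Complex.exp (z * lam ⟨k, hk⟩) := by
            rw [Complex.exp_eq_exp_iff_exists_int]
            refine ⟨j, ?_⟩
            rw [hz_def]
            push_cast
            push_cast at heqC
            linear_combination (Complex.I : ℂ) * heqC
          rw [hstep, ih hk]
      have hμc : ∀ n, Complex.exp (z * μ n) = Complex.exp (z * lam i0) := by
        intro n
        obtain ⟨i2, hi2⟩ := (heig (μ n)).mpr ⟨n, rfl⟩
        rw [← hi2]
        have := hlam' i2.val i2.isLt
        simpa [Fin.eta] using this
      have hD : D = Complex.exp (z * lam i0) • (1 : Matrix (Fin N) (Fin N) ℂ) := by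
        rw [hD_def]
        apply Matrix.ext
        intro a b
        by_cases hab : a = b
        · subst hab
          simp [Matrix.diagonal_apply_eq, Matrix.one_apply_eq, hμc]
        · simp [Matrix.diagonal_apply_ne _ hab, Matrix.one_apply_ne hab]
      rw [hexp, hD, Matrix.mul_smul, Matrix.mul_one, Matrix.smul_mul, hU₂,
        Matrix.smul_mulVec, Matrix.one_mulVec]
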